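/- Let G be a finite CLT group whose order is divisible by 4. Then G has a quotient (by some normal subgroup) isomorphic to one of the following groups: the cyclic group C4, the Klein four-group C2 × C2, the cyclic group C6, or the symmetric group S4. -/

import Mathlib

open Function Subgroup

section AuxHelpers

variable {G : Type*} [Group G]

/-- `Equiv.permCongr` as a `MulEquiv`. -/
def permMulEquiv {α β : Type*} (e : α ≃ β) : Equiv.Perm α ≃* Equiv.Perm β :=
  { e.permCongr with
    map_mul' := fun f g => by ext x; simp [Equiv.permCongr_apply] }

theorem normal_of_index_two (H : Subgroup G) (h : H.index = 2) : H.Normal := by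
  constructor
  intro n hn g
  rw [Subgroup.mul_mem_iff_of_index_two h, Subgroup.mul_mem_iff_of_index_two h,
    inv_mem_iff]
  simp [hn]

/-- A cyclic group of order `n` is isomorphic to `Multiplicative (ZMod n)`. -/
theorem mulEquivZMod (Q : Type*) [Group Q] (n : ℕ) (h : Nat.card Q = n)
    (hc : IsCyclic Q) : Nonempty (Q ≃* Multiplicative (ZMod n)) :=
  ⟨h ▸ (zmodCyclicMulEquiv hc).symm⟩

theorem index_eq_of_card_div [Finite G] {d : ℕ} (hd : d ∣ Nat.card G) (hdpos : 0 < d)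
    {K : Subgroup G} (hK : Nat.card K = Nat.card G / d) : K.index = d := by
  have hn0 : 0 < Nat.card G := Nat.card_pos
  have hm := Subgroup.card_mul_index K
  rw [hK] at hm
  have h4' : Nat.card G / d * d = Nat.card G := Nat.div_mul_cancel hd
  have hpos : 0 < Nat.card G / d := Nat.div_pos (Nat.le_of_dvd hn0 hd) hdpos
  exact Nat.eq_of_mul_eq_mul_left hpos (hm.trans h4'.symm)

end AuxHelpers

theorem card_four_iso (Q : Type*) [Group Q] [Finite Q] (h : Nat.card Q = 4) :
    Nonempty (Q ≃* Multiplicative (ZMod 4)) ∨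
      Nonempty (Q ≃* Multiplicative (ZMod 2 × ZMod 2)) := by
  by_cases hc : ∃ x : Q, orderOf x = 4
  · left
    obtain ⟨x, hx⟩ := hc
    have hcyc : IsCyclic Q := isCyclic_of_orderOf_eq_card x (by rw [hx, h])
    exact ⟨h ▸ (zmodCyclicMulEquiv hcyc).symm⟩
  · right
    push_neg at hc
    have h2 : ∀ x : Q, x ^ 2 = 1 := by
      intro x
      have hdvd : orderOf x ∣ 4 := h ▸ orderOf_dvd_natCard x
      have hne := hc x
      have hle : orderOf x ≤ 4 := Nat.le_of_dvd (by norm_num) hdvd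
      have : orderOf x ∣ 2 := by
        interval_cases (orderOf x) <;> revert hne hdvd <;> decide
      exact orderOf_dvd_iff_pow_eq_one.mp this
    have hinv : ∀ x : Q, x⁻¹ = x := fun x =>
      inv_eq_of_mul_eq_one_right (by have := h2 x; rwa [pow_two] at this)
    have hcomm : ∀ a b : Q, a * b = b * a := fun a b => by
      conv_lhs => rw [← hinv (a * b), mul_inv_rev, hinv, hinv]
    have : Nontrivial Q := Finite.one_lt_card_iff_nontrivial.mp (by omega)
    obtain ⟨x, hx1⟩ := exists_ne (1 : Q)
    have hzx : Subgroup.zpowers x ≠ ⊤ := by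
      intro ht
      have h1 : Nat.card (Subgroup.zpowers x) = 4 := by
        rw [ht, Subgroup.card_top, h]
      rw [Nat.card_zpowers] at h1
      exact hc x h1
    obtain ⟨y, hy⟩ : ∃ y : Q, y ∉ Subgroup.zpowers x := by
      by_contra hall
      push_neg at hall
      exact hzx ((Subgroup.eq_top_iff' _).mpr hall)
    have hy1 : y ≠ 1 := fun e => hy (e ▸ one_mem _)
    have hxy : x * y ≠ 1 := by
      intro e
      exact hy ((inv_eq_of_mul_eq_one_right e) ▸ inv_mem (Subgroup.mem_zpowers x))
    have key : ∀ (z : Q) (a b : ZMod 2), z ^ (a + b).val = z ^ a.val * z ^ b.val := by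
      intro z a b
      rw [← pow_add]
      conv_rhs => rw [pow_eq_pow_mod _ (h2 z)]
      rw [ZMod.val_add]
    let f : Multiplicative (ZMod 2 × ZMod 2) →* Q :=
      { toFun := fun c => x ^ (c.toAdd.1.val) * y ^ (c.toAdd.2.val),
        map_one' := by simp [ZMod.val_zero]
        map_mul' := fun c d => by
          show x ^ ((c.toAdd.1 + d.toAdd.1).val) * y ^ ((c.toAdd.2 + d.toAdd.2).val) = _
          letI : CommGroup Q := { (inferInstance : Group Q) with mul_comm := hcomm }
          rw [key x, key y]
          exact mul_mul_mul_comm _ _ _ _ }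
    have hZ : ∀ u : ZMod 2, u = 0 ∨ u = 1 := by decide
    have hinj : Function.Injective f := by
      rw [injective_iff_map_eq_one]
      intro c hcc
      have hfc : x ^ (c.toAdd.1.val) * y ^ (c.toAdd.2.val) = 1 := hcc
      rcases hZ c.toAdd.1 with ha | ha <;> rcases hZ c.toAdd.2 with hb | hb <;>
          rw [ha, hb] at hfc <;>
        simp only [ZMod.val_zero, ZMod.val_one, pow_zero, pow_one, one_mul, mul_one] at hfc
      · exact Multiplicative.toAdd.injective (Prod.ext ha hb)
      · exact absurd hfc hy1
      · exact absurd hfc hx1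
      · exact absurd hfc hxy
    have hbij : Function.Bijective f :=
      (Nat.bijective_iff_injective_and_card f).mpr
        ⟨hinj, by simp [Nat.card_eq_fintype_card, h]⟩
    exact ⟨(MulEquiv.ofBijective f hbij).symm⟩

theorem card_eight_quot (Q : Type*) [Group Q] [Finite Q] (h : Nat.card Q = 8) :
    ∃ N : Subgroup Q, N.Normal ∧ Nat.card (Q ⧸ N) = 4 := by
  haveI : Fact (Nat.Prime 2) := ⟨by norm_num⟩
  have : Nontrivial Q := Finite.one_lt_card_iff_nontrivial.mp (by omega)
  have hp : IsPGroup 2 Q := IsPGroup.of_card (n := 3) (by rw [h]; norm_num)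
  have hcz : Nontrivial (Subgroup.center Q) := hp.center_nontrivial
  have hd : Nat.card (Subgroup.center Q) ∣ 8 := h ▸ Subgroup.card_subgroup_dvd_card _
  have hne : 1 < Nat.card (Subgroup.center Q) :=
    Finite.one_lt_card_iff_nontrivial.mpr hcz
  have h2 : 2 ∣ Nat.card (Subgroup.center Q) := by
    have hle : Nat.card (Subgroup.center Q) ≤ 8 := Nat.le_of_dvd (by norm_num) hd
    interval_cases (Nat.card (Subgroup.center Q)) <;> revert hd <;> decide
  obtain ⟨z, hz⟩ := exists_prime_orderOf_dvd_card' (G := Subgroup.center Q) 2 h2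
  set N : Subgroup Q := Subgroup.zpowers (z : Q) with hN
  have hNle : N ≤ Subgroup.center Q := (Subgroup.zpowers_le).mpr z.2
  have hNnormal : N.Normal := by
    constructor
    intro n hn g
    have hcn := (Subgroup.mem_center_iff.mp (hNle hn)) g
    have : g * n * g⁻¹ = n := by rw [hcn, mul_inv_cancel_right]
    rwa [this]
  refine ⟨N, hNnormal, ?_⟩
  have hcN : Nat.card N = 2 := by
    rw [hN, Nat.card_zpowers]
    rw [show ((z : Q)) = (Subgroup.center Q).subtype z from rfl,
      orderOf_injective (Subgroup.center Q).subtype (Subgroup.subtype_injective _) z, hz]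
  have hmi := Subgroup.card_mul_index N
  rw [Subgroup.index_eq_card, hcN, h] at hmi
  omega

theorem sylow_normal_of_forall_eq {p : ℕ} [Fact p.Prime] {Q : Type*} [Group Q] [Finite Q]
    (P : Sylow p Q) (hs : ∀ R S : Sylow p Q, R = S) : (P : Subgroup Q).Normal := by
  rw [← Subgroup.normalizer_eq_top_iff, Subgroup.eq_top_iff']
  intro g
  refine Sylow.smul_eq_iff_mem_normalizer.mp ?_
  exact hs _ _

theorem sylow_card_eq {p : ℕ} [Fact p.Prime] {Q : Type*} [Group Q] [Finite Q]
    {n m : ℕ} (h : Nat.card Q = p ^ n * m) (hm : ¬ p ∣ m) (P : Sylow p Q) :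
    Nat.card P = p ^ n := by
  have hp := (Fact.out : p.Prime)
  have hdvd : p ^ n ∣ Nat.card P :=
    P.pow_dvd_card_of_pow_dvd_card (by rw [h]; exact Dvd.intro m rfl)
  obtain ⟨k, hk⟩ := IsPGroup.iff_card.mp P.isPGroup'
  have hdv : Nat.card P ∣ p ^ n * m := h ▸ Subgroup.card_subgroup_dvd_card _
  rw [hk] at hdvd hdv ⊢
  have hkn : n ≤ k := (Nat.pow_dvd_pow_iff_le_right hp.one_lt).mp hdvd
  have hnk : k ≤ n := by
    by_contra hlt
    push_neg at hlt
    have h1 : p ^ n * p ∣ p ^ k := by rw [← pow_succ]; exact pow_dvd_pow p hlt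
    have h2 : p ^ n * p ∣ p ^ n * m := h1.trans hdv
    exact hm ((Nat.mul_dvd_mul_iff_left (pow_pos hp.pos n)).mp h2)
  rw [Nat.le_antisymm hkn hnk]

theorem orderOf_dvd_card_of_mem {Q : Type*} [Group Q] [Finite Q] {H : Subgroup Q} {x : Q}
    (hx : x ∈ H) : orderOf x ∣ Nat.card H := by
  have h1 := orderOf_dvd_natCard (⟨x, hx⟩ : H)
  rw [← Subgroup.orderOf_coe] at h1
  exact h1

theorem card_twelve_quot (Q : Type*) [Group Q] [Finite Q] (h : Nat.card Q = 12) :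
    (∃ N : Subgroup Q, N.Normal ∧ Nat.card (Q ⧸ N) = 4) ∨
      (∃ N : Subgroup Q, N.Normal ∧ Nat.card (Q ⧸ N) = 3) := by
  classical
  haveI : Fact (Nat.Prime 3) := ⟨by norm_num⟩
  haveI : Fact (Nat.Prime 2) := ⟨by norm_num⟩
  obtain ⟨P3⟩ : Nonempty (Sylow 3 Q) := inferInstance
  have hP3 : Nat.card P3 = 3 := by
    simpa using sylow_card_eq (p := 3) (n := 1) (m := 4) (by rw [h]; norm_num) (by norm_num) P3
  have hP3i : (P3 : Subgroup Q).index = 4 := by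
    have := Subgroup.card_mul_index (P3 : Subgroup Q)
    rw [hP3, h] at this; omega
  by_cases hs3 : ∀ R S : Sylow 3 Q, R = S
  · left
    refine ⟨P3, sylow_normal_of_forall_eq P3 hs3, ?_⟩
    rw [← Subgroup.index_eq_card, hP3i]
  · right
    obtain ⟨P2⟩ : Nonempty (Sylow 2 Q) := inferInstance
    have hP2 : ∀ P : Sylow 2 Q, Nat.card P = 4 := fun P => by
      simpa using sylow_card_eq (p := 2) (n := 2) (m := 3) (by rw [h]; norm_num) (by norm_num) P
    -- the number of Sylow 3-subgroups is 4
    have hn3d : Nat.card (Sylow 3 Q) ∣ 4 := hP3i ▸ P3.card_dvd_index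
    have hn3m : Nat.card (Sylow 3 Q) % 3 = 1 % 3 := card_sylow_modEq_one 3 Q
    have hn3 : Nat.card (Sylow 3 Q) = 4 := by
      have h1 : Nat.card (Sylow 3 Q) ≤ 4 := Nat.le_of_dvd (by norm_num) hn3d
      have hne1 : Nat.card (Sylow 3 Q) ≠ 1 := by
        intro he
        exact hs3 fun R S =>
          @Subsingleton.elim _ (Nat.card_eq_one_iff_unique.mp he).1 R S
      interval_cases (Nat.card (Sylow 3 Q)) <;> revert hn3d hn3m hne1 <;> decide
    haveI : Fintype Q := Fintype.ofFinite Q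
    have hcard : Fintype.card Q = 12 := by rw [← Nat.card_eq_fintype_card, h]
    set S : Finset Q := Finset.univ.filter (fun x => x ^ 3 = 1) with hS
    set t : Sylow 3 Q → Finset Q :=
      fun P => Set.toFinset ((P : Subgroup Q) : Set Q) \ {1} with ht
    have htmem : ∀ (P : Sylow 3 Q) (x : Q), x ∈ t P ↔ x ∈ (P : Subgroup Q) ∧ x ≠ 1 := by
      intro P x
      simp [ht, Set.mem_toFinset]
      exact fun _ => Iff.rfl
    have htP_card : ∀ P : Sylow 3 Q, Nat.card P = 3 → (t P).card = 2 := by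
      intro P hcP
      rw [ht]
      rw [Finset.card_sdiff_of_subset (by simp [Set.mem_toFinset, one_mem])]
      rw [Set.toFinset_card]
      simp only [SetLike.coe_sort_coe]
      rw [← Nat.card_eq_fintype_card, hcP]
      simp
    have hP3card : ∀ P : Sylow 3 Q, Nat.card P = 3 := fun P => by
      simpa using sylow_card_eq (p := 3) (n := 1) (m := 4) (by rw [h]; norm_num) (by norm_num) P
    have ht_sub : ∀ P : Sylow 3 Q, t P ⊆ S := by
      intro P x hx
      obtain ⟨hxP, -⟩ := (htmem P x).mp hx
      have h3 : orderOf x ∣ 3 := (hP3card P) ▸ orderOf_dvd_card_of_mem hxP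
      rw [hS, Finset.mem_filter]
      exact ⟨Finset.mem_univ x, orderOf_dvd_iff_pow_eq_one.mp h3⟩
    have hdisj : ∀ R S' : Sylow 3 Q, R ≠ S' → Disjoint (t R) (t S') := by
      intro R S' hne
      rw [Finset.disjoint_left]
      intro x hxR hxS
      obtain ⟨hxR', hx1⟩ := (htmem R x).mp hxR
      obtain ⟨hxS', -⟩ := (htmem S' x).mp hxS
      have horder : orderOf x = 3 := by
        have hdv : orderOf x ∣ 3 := (hP3card R) ▸ orderOf_dvd_card_of_mem hxR'
        rcases (Nat.Prime.eq_one_or_self_of_dvd (by norm_num) _ hdv) with h1 | h1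
        · exact absurd (orderOf_eq_one_iff.mp h1) hx1
        · exact h1
      have hzR : Subgroup.zpowers x = (R : Subgroup Q) :=
        Subgroup.eq_of_le_of_card_ge (Subgroup.zpowers_le.mpr hxR')
          (by rw [Nat.card_zpowers, horder, hP3card R])
      have hzS : Subgroup.zpowers x = (S' : Subgroup Q) :=
        Subgroup.eq_of_le_of_card_ge (Subgroup.zpowers_le.mpr hxS')
          (by rw [Nat.card_zpowers, horder, hP3card S'])
      exact hne (Sylow.ext (hzR.symm.trans hzS))
    have hbig : 9 ≤ S.card := by
      have hUcard : (Finset.univ.biUnion t).card = 8 := by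
        rw [Finset.card_biUnion (fun R _ S' _ hne => hdisj R S' hne)]
        have hc4 : Fintype.card (Sylow 3 Q) = 4 := by
          rw [← Nat.card_eq_fintype_card, hn3]
        rw [Finset.sum_congr rfl (fun P _ => htP_card P (hP3card P)), Finset.sum_const,
          smul_eq_mul, Finset.card_univ, hc4]
      have hsubS : insert (1 : Q) (Finset.univ.biUnion t) ⊆ S := by
        intro x hx
        rcases Finset.mem_insert.mp hx with rfl | hx
        · simp [hS]
        · obtain ⟨P, -, hxP⟩ := Finset.mem_biUnion.mp hx
          exact ht_sub P hxP
      have hicard : (insert (1 : Q) (Finset.univ.biUnion t)).card = 9 := by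
        rw [Finset.card_insert_of_notMem, hUcard]
        intro hmem
        obtain ⟨P, -, hP⟩ := Finset.mem_biUnion.mp hmem
        exact ((htmem P 1).mp hP).2 rfl
      exact hicard ▸ Finset.card_le_card hsubS
    have hcompl : (Finset.univ.filter (fun x : Q => ¬ x ^ 3 = 1)).card ≤ 3 := by
      have hfc := Finset.card_filter_add_card_filter_not
        (s := (Finset.univ : Finset Q)) (p := fun x : Q => x ^ 3 = 1)
      rw [Finset.card_univ, hcard, ← hS] at hfc
      omega
    have hs2 : ∀ R S' : Sylow 2 Q, R = S' := by
      by_contra hne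
      push_neg at hne
      obtain ⟨R, S', hRS⟩ := hne
      have hmem2 : ∀ (P : Sylow 2 Q) (x : Q), x ∈ (P : Subgroup Q) → x ≠ 1 → ¬ x ^ 3 = 1 := by
        intro P x hx hx1 h3x
        have hd4 : orderOf x ∣ 4 := (hP2 P) ▸ orderOf_dvd_card_of_mem hx
        have hd3 : orderOf x ∣ 3 := orderOf_dvd_iff_pow_eq_one.mpr h3x
        have : orderOf x ∣ 1 := Nat.dvd_gcd hd3 hd4
        exact hx1 (orderOf_eq_one_iff.mp (Nat.dvd_one.mp this))
      have hnle : ¬ (S' : Subgroup Q) ≤ (R : Subgroup Q) := by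
        intro hle
        exact hRS (Sylow.ext (Subgroup.eq_of_le_of_card_ge hle
          (by rw [hP2, hP2])).symm)
      obtain ⟨w, hwS, hwR⟩ := SetLike.not_le_iff_exists.mp hnle
      have hw1 : w ≠ 1 := fun e => hwR (e ▸ one_mem _)
      set C := Finset.univ.filter (fun x : Q => ¬ x ^ 3 = 1) with hC
      set TR : Finset Q := Set.toFinset ((R : Subgroup Q) : Set Q) \ {1} with hTR
      have hsubC : insert w TR ⊆ C := by
        intro x hx
        rcases Finset.mem_insert.mp hx with rfl | hx
        · rw [hC, Finset.mem_filter]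
          exact ⟨Finset.mem_univ x, hmem2 S' x hwS hw1⟩
        · rw [hTR] at hx
          rw [Finset.mem_sdiff, Set.mem_toFinset, Finset.mem_singleton] at hx
          rw [hC, Finset.mem_filter]
          exact ⟨Finset.mem_univ x, hmem2 R x hx.1 hx.2⟩
      have hTRcard : TR.card = 3 := by
        rw [hTR, Finset.card_sdiff_of_subset (by simp [Set.mem_toFinset, one_mem]), Set.toFinset_card]
        simp only [SetLike.coe_sort_coe]
        rw [← Nat.card_eq_fintype_card, hP2 R]
        simp
      have hwTR : w ∉ TR := by
        rw [hTR, Finset.mem_sdiff, Set.mem_toFinset]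
        intro hcon
        exact hwR hcon.1
      have h4le : 4 ≤ C.card := by
        have := Finset.card_le_card hsubC
        rwa [Finset.card_insert_of_notMem hwTR, hTRcard] at this
      omega
    refine ⟨P2, sylow_normal_of_forall_eq P2 hs2, ?_⟩
    rw [← Subgroup.index_eq_card]
    have := Subgroup.card_mul_index (P2 : Subgroup Q)
    rw [hP2 P2, h] at this
    omega


theorem build_goal {G : Type*} [Group G] {R : Type*} [Group R] (f : G →* R)
    (hf : Surjective f)
    (h : Nonempty (R ≃* Multiplicative (ZMod 4)) ∨
      Nonempty (R ≃* Multiplicative (ZMod 2 × ZMod 2)) ∨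
      Nonempty (R ≃* Multiplicative (ZMod 6)) ∨
      Nonempty (R ≃* Equiv.Perm (Fin 4))) :
    ∃ N : Subgroup G, ∃ _h : N.Normal,
      Nonempty ((G ⧸ N) ≃* Multiplicative (ZMod 4)) ∨
      Nonempty ((G ⧸ N) ≃* Multiplicative (ZMod 2 × ZMod 2)) ∨
      Nonempty ((G ⧸ N) ≃* Multiplicative (ZMod 6)) ∨
      Nonempty ((G ⧸ N) ≃* Equiv.Perm (Fin 4)) := by
  refine ⟨f.ker, inferInstance, ?_⟩
  have e := QuotientGroup.quotientKerEquivOfSurjective f hf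
  exact h.imp (Nonempty.map fun i => e.trans i) (Or.imp (Nonempty.map fun i => e.trans i)
    (Or.imp (Nonempty.map fun i => e.trans i) (Nonempty.map fun i => e.trans i)))



/-- A finite group `G` is a CLT group (Converse of Lagrange's Theorem) if for every
divisor `d` of `|G|` there exists a subgroup of `G` of order `d`. -/
def IsCLT (G : Type*) [Group G] : Prop :=
  ∀ d : ℕ, d ∣ Nat.card G → ∃ H : Subgroup G, Nat.card H = d

/-- Theorem 8.6(c): a finite CLT group whose order is divisible by `4` has a quotient
isomorphic to `C₄`, `C₂ × C₂`, `C₆`, or `S₄`. -/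
theorem CLT_four_dvd_quotient (G : Type*) [Group G] [Finite G]
    (hclt : IsCLT G) (h4 : 4 ∣ Nat.card G) :
    ∃ N : Subgroup G, ∃ _h : N.Normal,
      Nonempty ((G ⧸ N) ≃* Multiplicative (ZMod 4)) ∨
      Nonempty ((G ⧸ N) ≃* Multiplicative (ZMod 2 × ZMod 2)) ∨
      Nonempty ((G ⧸ N) ≃* Multiplicative (ZMod 6)) ∨
      Nonempty ((G ⧸ N) ≃* Equiv.Perm (Fin 4)) := by
  classical
  obtain ⟨K, hK⟩ := hclt (Nat.card G / 4) (Nat.div_dvd_of_dvd h4)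
  have hKi : K.index = 4 := index_eq_of_card_div h4 (by norm_num) hK
  have hQK : Nat.card (G ⧸ K) = 4 := by rw [← Subgroup.index_eq_card, hKi]
  let e : (G ⧸ K) ≃ Fin 4 := Finite.equivFinOfCardEq hQK
  let φ : G →* Equiv.Perm (Fin 4) :=
    (permMulEquiv e).toMonoidHom.comp (MulAction.toPermHom G (G ⧸ K))
  have hker : φ.ker = Subgroup.normalCore K := by
    rw [Subgroup.normalCore_eq_ker]
    ext g
    simp [φ, MonoidHom.mem_ker]
  have h4T : 4 ∣ φ.ker.index := by
    rw [hker]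
    exact hKi ▸ Subgroup.index_dvd_of_le K.normalCore_le
  have hcQ : Nat.card (G ⧸ φ.ker) = φ.ker.index := (Subgroup.index_eq_card _).symm
  have hrange : Nat.card (G ⧸ φ.ker) = Nat.card φ.range :=
    Nat.card_congr (QuotientGroup.quotientKerEquivRange φ).toEquiv
  have hperm24 : Nat.card (Equiv.Perm (Fin 4)) = 24 := by
    rw [Nat.card_eq_fintype_card, Fintype.card_perm]
    norm_num [Nat.factorial]
  have h24 : Nat.card (G ⧸ φ.ker) ∣ 24 := by
    rw [hrange, ← hperm24]
    exact Subgroup.card_subgroup_dvd_card φ.range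
  have h4Q : 4 ∣ Nat.card (G ⧸ φ.ker) := hcQ ▸ h4T
  have hmk : Surjective (QuotientGroup.mk' φ.ker) := QuotientGroup.mk'_surjective _
  have hcases : Nat.card (G ⧸ φ.ker) = 4 ∨ Nat.card (G ⧸ φ.ker) = 8 ∨
      Nat.card (G ⧸ φ.ker) = 12 ∨ Nat.card (G ⧸ φ.ker) = 24 := by
    obtain ⟨m, hm⟩ := h4Q
    have hm6 : m ∣ 6 := by
      have h24' := h24
      rw [hm, show (24 : ℕ) = 4 * 6 from rfl] at h24'
      exact (Nat.mul_dvd_mul_iff_left (show 0 < 4 by norm_num)).mp h24'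
    have hmle : m ≤ 6 := Nat.le_of_dvd (by norm_num) hm6
    rw [hm]
    interval_cases m <;> revert hm6 <;> decide
  rcases hcases with hQ | hQ | hQ | hQ
  · exact build_goal (QuotientGroup.mk' φ.ker) hmk
      ((card_four_iso _ hQ).elim Or.inl (fun h => Or.inr (Or.inl h)))
  · obtain ⟨N, hNn, hN4⟩ := card_eight_quot _ hQ
    haveI := hNn
    have hsurj : Surjective ((QuotientGroup.mk' N).comp (QuotientGroup.mk' φ.ker)) :=
      (QuotientGroup.mk'_surjective N).comp hmk
    exact build_goal _ hsurj
      ((card_four_iso _ hN4).elim Or.inl (fun h => Or.inr (Or.inl h)))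
  · obtain h12 | h12 := card_twelve_quot _ hQ
    · obtain ⟨N, hNn, hN4⟩ := h12
      haveI := hNn
      have hsurj : Surjective ((QuotientGroup.mk' N).comp (QuotientGroup.mk' φ.ker)) :=
        (QuotientGroup.mk'_surjective N).comp hmk
      exact build_goal _ hsurj
        ((card_four_iso _ hN4).elim Or.inl (fun h => Or.inr (Or.inl h)))
    · obtain ⟨N, hNn, hN3⟩ := h12
      haveI := hNn
      have h2 : 2 ∣ Nat.card G := dvd_trans (by norm_num) h4
      obtain ⟨H, hH⟩ := hclt (Nat.card G / 2) (Nat.div_dvd_of_dvd h2)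
      have hHi : H.index = 2 := index_eq_of_card_div h2 (by norm_num) hH
      haveI hHn : H.Normal := normal_of_index_two H hHi
      have hH2 : Nat.card (G ⧸ H) = 2 := by rw [← Subgroup.index_eq_card, hHi]
      set f2 : G →* (G ⧸ H) := QuotientGroup.mk' H with hf2def
      set f3 : G →* ((G ⧸ φ.ker) ⧸ N) :=
        (QuotientGroup.mk' N).comp (QuotientGroup.mk' φ.ker) with hf3def
      have hf2 : Surjective f2 := QuotientGroup.mk'_surjective H
      have hf3 : Surjective f3 := (QuotientGroup.mk'_surjective N).comp hmk
      set f := f2.prod f3 with hfdef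
      have hc2 : 2 ∣ Nat.card f.range := by
        have hπ : Surjective ((MonoidHom.fst (G ⧸ H) ((G ⧸ φ.ker) ⧸ N)).comp f.range.subtype) := by
          intro a
          obtain ⟨g, hg⟩ := hf2 a
          exact ⟨⟨f g, ⟨g, rfl⟩⟩, hg⟩
        exact hH2 ▸ Subgroup.card_dvd_of_surjective _ hπ
      have hc3 : 3 ∣ Nat.card f.range := by
        have hπ : Surjective ((MonoidHom.snd (G ⧸ H) ((G ⧸ φ.ker) ⧸ N)).comp f.range.subtype) := by
          intro a
          obtain ⟨g, hg⟩ := hf3 a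
          exact ⟨⟨f g, ⟨g, rfl⟩⟩, hg⟩
        exact hN3 ▸ Subgroup.card_dvd_of_surjective _ hπ
      have h6 : 6 ∣ Nat.card f.range :=
        Nat.Coprime.mul_dvd_of_dvd_of_dvd (by norm_num) hc2 hc3
      have hprod_card : Nat.card ((G ⧸ H) × ((G ⧸ φ.ker) ⧸ N)) = 6 := by
        rw [Nat.card_prod, hH2, hN3]
      have htop : f.range = ⊤ := by
        apply Subgroup.eq_top_of_le_card
        rw [hprod_card]
        exact Nat.le_of_dvd Nat.card_pos h6
      have hfsurj : Surjective f := MonoidHom.range_eq_top.mp htop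
      haveI : Fact (Nat.Prime 2) := ⟨by norm_num⟩
      haveI : Fact (Nat.Prime 3) := ⟨by norm_num⟩
      have hcyc2 : IsCyclic (G ⧸ H) := isCyclic_of_prime_card hH2
      have hcyc3 : IsCyclic ((G ⧸ φ.ker) ⧸ N) := isCyclic_of_prime_card hN3
      obtain ⟨i2⟩ := mulEquivZMod _ 2 hH2 hcyc2
      obtain ⟨i3⟩ := mulEquivZMod _ 3 hN3 hcyc3
      have crt : ZMod 2 × ZMod 3 ≃+ ZMod 6 :=
        (ZMod.chineseRemainder (by norm_num)).symm.toAddEquiv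
      have itarget : ((G ⧸ H) × ((G ⧸ φ.ker) ⧸ N)) ≃* Multiplicative (ZMod 6) :=
        (MulEquiv.prodCongr i2 i3).trans
          ((MulEquiv.prodMultiplicative (G := ZMod 2) (H := ZMod 3)).symm.trans
            (AddEquiv.toMultiplicative crt))
      exact build_goal f hfsurj (Or.inr (Or.inr (Or.inl ⟨itarget⟩)))
  · have htop : φ.range = ⊤ := by
      apply Subgroup.eq_top_of_card_eq
      rw [← hrange, hQ, hperm24]
    exact build_goal φ (MonoidHom.range_eq_top.mp htop)
      (Or.inr (Or.inr (Or.inr ⟨MulEquiv.refl _⟩)))
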